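/- Two-dimensional universality of split coequalizers of functors: suppose (f, g, h, s, t) is a split coequalizer of functors X ⇉ Y → Z (so h∘f = h∘g, h∘s = 1_Z, s∘h = g∘t, f∘t = 1_Y as functors). Let p, q : Y → W be functors with p∘f = p∘g and q∘f = q∘g, and let p̃ = p∘s, q̃ = q∘s be the induced factorizations through h. Then whiskering with h and with s give mutually inverse bijections between natural transformations α̃ : p̃ → q̃ and natural transformations α : p → q satisfying α ▷ f = α ▷ g (whiskering of α with f and g agree). Moreover α̃ is a natural isomorphism if and only if the corresponding α is. -/

import Mathlib

open CategoryTheory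

private lemma wlCongr {A Y W : Type*} [Category A] [Category Y] [Category W]
    {F G : A ⥤ Y} (hFG : F = G) {p q : Y ⥤ W} (α : p ⟶ q) :
    Functor.whiskerLeft F α = eqToHom (by rw [hFG]) ≫ Functor.whiskerLeft G α ≫ eqToHom (by rw [hFG]) := by
  subst hFG; simp

private lemma wlEqToHom {A Y W : Type*} [Category A] [Category Y] [Category W]
    {p q : Y ⥤ W} (e : p = q) (F : A ⥤ Y) :
    Functor.whiskerLeft F (eqToHom e) = eqToHom (by rw [e]) := by
  subst e; simp

private lemma wlIdLeft {Y W : Type*} [Category Y] [Category W]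
    {p q : Y ⥤ W} (α : p ⟶ q) :
    Functor.whiskerLeft (𝟭 Y) α = eqToHom (p.id_comp) ≫ α ≫ eqToHom (q.id_comp).symm := by
  aesop_cat

private lemma wlTwice {B C D E : Type*} [Category B] [Category C] [Category D] [Category E]
    (F : B ⥤ C) (G : C ⥤ D) {H K : D ⥤ E} (α : H ⟶ K) :
    Functor.whiskerLeft F (Functor.whiskerLeft G α) = Functor.whiskerLeft (F ⋙ G) α :=
  rfl

/-- Two-dimensional universality of split coequalizers of functors: whiskering
with `h` and with `s` give mutually inverse bijections between natural
transformations `p̃ → q̃` (where `p̃ = s ⋙ p`, `q̃ = s ⋙ q`) and natural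
transformations `α : p → q` whose whiskerings with `f` and `g` agree; moreover
these bijections preserve and reflect invertibility. -/
theorem split_coequalizer_two_dimensional {X Y Z W : Type*}
    [Category X] [Category Y] [Category Z] [Category W]
    (f g : X ⥤ Y) (h : Y ⥤ Z) (s : Z ⥤ Y) (t : Y ⥤ X)
    (h1 : f ⋙ h = g ⋙ h) (h2 : s ⋙ h = 𝟭 Z) (h3 : h ⋙ s = t ⋙ g) (h4 : t ⋙ f = 𝟭 Y)
    (p q : Y ⥤ W) (hp : f ⋙ p = g ⋙ p) (hq : f ⋙ q = g ⋙ q) :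
    ∀ (ep : h ⋙ (s ⋙ p) = p) (eq' : h ⋙ (s ⋙ q) = q),
      ∃ e : {α : p ⟶ q // Functor.whiskerLeft f α ≫ eqToHom hq = eqToHom hp ≫ Functor.whiskerLeft g α} ≃
            ((s ⋙ p) ⟶ (s ⋙ q)),
        (∀ α, e α = Functor.whiskerLeft s α.1) ∧
        (∀ αt : (s ⋙ p) ⟶ (s ⋙ q),
          (e.symm αt).1 = eqToHom ep.symm ≫ Functor.whiskerLeft h αt ≫ eqToHom eq') ∧
        (∀ α, IsIso α.1 ↔ IsIso (e α)) := by
  intro ep eq'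
  have key : ∀ (α : p ⟶ q),
      Functor.whiskerLeft f α ≫ eqToHom hq = eqToHom hp ≫ Functor.whiskerLeft g α →
      eqToHom ep.symm ≫ Functor.whiskerLeft h (Functor.whiskerLeft s α) ≫ eqToHom eq' = α := by
    intro α hα
    have hg : Functor.whiskerLeft g α = eqToHom hp.symm ≫ Functor.whiskerLeft f α ≫ eqToHom hq := by
      rw [hα]; simp
    rw [wlTwice, wlCongr h3 α, ← wlTwice t g, hg,
      Functor.whiskerLeft_comp, Functor.whiskerLeft_comp, wlEqToHom, wlEqToHom,
      wlTwice, wlCongr h4 α, wlIdLeft]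
    simp
  have mem : ∀ αt : (s ⋙ p) ⟶ (s ⋙ q),
      Functor.whiskerLeft f (eqToHom ep.symm ≫ Functor.whiskerLeft h αt ≫ eqToHom eq') ≫ eqToHom hq =
        eqToHom hp ≫ Functor.whiskerLeft g (eqToHom ep.symm ≫ Functor.whiskerLeft h αt ≫ eqToHom eq') := by
    intro αt
    rw [Functor.whiskerLeft_comp, Functor.whiskerLeft_comp, Functor.whiskerLeft_comp, Functor.whiskerLeft_comp,
      wlEqToHom, wlEqToHom, wlEqToHom, wlEqToHom, wlTwice, wlTwice,
      wlCongr h1 αt]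
    simp
  refine ⟨⟨fun α => Functor.whiskerLeft s α.1,
    fun αt => ⟨eqToHom ep.symm ≫ Functor.whiskerLeft h αt ≫ eqToHom eq', mem αt⟩, ?_, ?_⟩,
    fun α => rfl, fun αt => rfl, ?_⟩
  · rintro ⟨α, hα⟩
    ext1
    exact key α hα
  · intro αt
    show Functor.whiskerLeft s (eqToHom ep.symm ≫ Functor.whiskerLeft h αt ≫ eqToHom eq') = αt
    rw [Functor.whiskerLeft_comp, Functor.whiskerLeft_comp, wlEqToHom, wlEqToHom, wlTwice,
      wlCongr h2 αt, wlIdLeft]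
    simp
  · rintro ⟨α, hα⟩
    constructor
    · intro hi
      show IsIso (Functor.whiskerLeft s α)
      infer_instance
    · intro hi
      have hi' : IsIso (Functor.whiskerLeft s α) := hi
      show IsIso α
      rw [← key α hα]
      infer_instance
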